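/- Let P ∈ ℝ^{n×n} and Q ∈ ℝ^{m×m} be symmetric positive semidefinite and let L : ℝ^{n×m} → ℝ be any function. Then inf over Θ of L(Θ) + ‖PΘQ‖_* equals inf over pairs (U, V) with U ∈ ℝ^{n×m}, V ∈ ℝ^{m×m} of L(UVᵀ) + (1/2)‖PU‖_F² + (1/2)‖QV‖_F². -/

import Mathlib

set_option maxHeartbeats 1000000


open Matrix BigOperators

/-- Nuclear norm: sum of singular values, i.e. trace of the PSD square root of `Θᵀ * Θ`. -/
noncomputable def nuclearNorm {n m : ℕ} (Θ : Matrix (Fin n) (Fin m) ℝ) : ℝ :=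
  ((Matrix.posSemidef_conjTranspose_mul_self Θ).1.eigenvectorUnitary.1 *
    diagonal ((RCLike.ofReal : ℝ → ℝ) ∘ (√·) ∘ (Matrix.posSemidef_conjTranspose_mul_self Θ).1.eigenvalues) *
    (star (Matrix.posSemidef_conjTranspose_mul_self Θ).1.eigenvectorUnitary : Matrix (Fin m) (Fin m) ℝ)).trace

/-- Frobenius norm. -/
noncomputable def frobNorm {n m : ℕ} (A : Matrix (Fin n) (Fin m) ℝ) : ℝ :=
  Real.sqrt (∑ i, ∑ j, (A i j) ^ 2)

/-- `B` is the Moore–Penrose pseudoinverse of `A` (the four Penrose conditions). -/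
def IsMoorePenrose {n m : ℕ} (A : Matrix (Fin n) (Fin m) ℝ) (B : Matrix (Fin m) (Fin n) ℝ) : Prop :=
  A * B * A = A ∧ B * A * B = B ∧ (A * B)ᵀ = A * B ∧ (B * A)ᵀ = B * A

/-- `Pr` is the orthogonal projection matrix onto the subspace `S`. -/
def IsOrthProjOnto {n : ℕ} (Pr : Matrix (Fin n) (Fin n) ℝ) (S : Submodule ℝ (Fin n → ℝ)) : Prop :=
  Prᵀ = Pr ∧ Pr * Pr = Pr ∧ LinearMap.range Pr.mulVecLin = S

noncomputable def N2 {a b : ℕ} (A : Matrix (Fin a) (Fin b) ℝ) : ℝ := Matrix.trace (Aᵀ * A)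

lemma trace_t_mul {a b : ℕ} (C D : Matrix (Fin a) (Fin b) ℝ) :
    Matrix.trace (Cᵀ * D) = ∑ j, ∑ i, C i j * D i j := by
  simp [Matrix.trace, Matrix.mul_apply, Matrix.diag]

lemma N2_eq_sum {a b : ℕ} (A : Matrix (Fin a) (Fin b) ℝ) :
    N2 A = ∑ i, ∑ j, (A i j)^2 := by
  rw [N2, trace_t_mul, Finset.sum_comm]
  simp [sq]

lemma N2_nonneg {a b : ℕ} (A : Matrix (Fin a) (Fin b) ℝ) : 0 ≤ N2 A := by
  rw [N2_eq_sum]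
  positivity

lemma frobNorm_sq {a b : ℕ} (A : Matrix (Fin a) (Fin b) ℝ) : frobNorm A ^ 2 = N2 A := by
  rw [frobNorm, N2_eq_sum, Real.sq_sqrt]
  positivity

lemma trace_t_mul_le {a b : ℕ} (C D : Matrix (Fin a) (Fin b) ℝ) :
    Matrix.trace (Cᵀ * D) ≤ 1/2 * N2 C + 1/2 * N2 D := by
  have h : ∀ p : (Fin a) × (Fin b), C p.1 p.2 * D p.1 p.2 ≤
      1/2 * (C p.1 p.2)^2 + 1/2 * (D p.1 p.2)^2 := by
    intro p; nlinarith [sq_nonneg (C p.1 p.2 - D p.1 p.2)]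
  rw [trace_t_mul, N2_eq_sum, N2_eq_sum, Finset.sum_comm]
  have := Finset.sum_le_sum (fun p _ => h p) (s := Finset.univ)
  calc ∑ y : Fin a, ∑ x : Fin b, C y x * D y x
      = ∑ p : Fin a × Fin b, C p.1 p.2 * D p.1 p.2 := by rw [Fintype.sum_prod_type]
    _ ≤ ∑ p : Fin a × Fin b, (1/2 * (C p.1 p.2)^2 + 1/2 * (D p.1 p.2)^2) := this
    _ = _ := by
        rw [Finset.sum_add_distrib, ← Finset.mul_sum, ← Finset.mul_sum,
          Fintype.sum_prod_type, Fintype.sum_prod_type]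

section conj
variable {k : ℕ}

lemma nn_cancel_left {X : Matrix (Fin k) (Fin k) ℝ} (hX : Xᵀ * X = 1)
    {a : ℕ} (Z : Matrix (Fin k) (Fin a) ℝ) : Xᵀ * (X * Z) = Z := by
  rw [← Matrix.mul_assoc, hX, Matrix.one_mul]

lemma nn_conj_mul {X : Matrix (Fin k) (Fin k) ℝ} (hX : Xᵀ * X = 1) (a b : Fin k → ℝ) :
    (X * diagonal a * Xᵀ) * (X * diagonal b * Xᵀ)
      = X * diagonal (fun i => a i * b i) * Xᵀ := by
  simp only [Matrix.mul_assoc, nn_cancel_left hX]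
  rw [← Matrix.mul_assoc (diagonal a), diagonal_mul_diagonal]

lemma nn_conj_trace {X : Matrix (Fin k) (Fin k) ℝ} (hX : Xᵀ * X = 1) (a : Fin k → ℝ) :
    Matrix.trace (X * diagonal a * Xᵀ) = ∑ i, a i := by
  rw [Matrix.trace_mul_cycle, hX, Matrix.one_mul, trace_diagonal]

lemma nn_conj_t {X : Matrix (Fin k) (Fin k) ℝ} (a : Fin k → ℝ) :
    (X * diagonal a * Xᵀ)ᵀ = X * diagonal a * Xᵀ := by
  rw [transpose_mul, transpose_mul, diagonal_transpose, transpose_transpose, Matrix.mul_assoc]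

end conj

lemma spectral_bundle {n m : ℕ} (M : Matrix (Fin n) (Fin m) ℝ) :
    ∃ (X : Matrix (Fin m) (Fin m) ℝ) (d : Fin m → ℝ),
      Xᵀ * X = 1 ∧ X * Xᵀ = 1 ∧ (∀ i, 0 ≤ d i) ∧ Mᵀ * M = X * diagonal d * Xᵀ ∧
        nuclearNorm M = ∑ i, Real.sqrt (d i) := by
  have hH := Matrix.posSemidef_conjTranspose_mul_self M
  have hherm := hH.1
  set X : Matrix (Fin m) (Fin m) ℝ := (Matrix.IsHermitian.eigenvectorUnitary hherm : Matrix (Fin m) (Fin m) ℝ) with hXdef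
  set d := Matrix.IsHermitian.eigenvalues hherm with hddef
  have hs : star X = Xᵀ := by
    rw [Matrix.star_eq_conjTranspose, Matrix.conjTranspose_eq_transpose_of_trivial]
  have hX : Xᵀ * X = 1 := by
    rw [← hs]; exact Unitary.coe_star_mul_self _
  have hX' : X * Xᵀ = 1 := by
    rw [← hs]; exact Unitary.coe_mul_star_self _
  have hdnn : ∀ i, 0 ≤ d i := fun i => hH.eigenvalues_nonneg i
  have hspec : Mᴴ * M = X * diagonal d * Xᵀ := by
    have := Matrix.IsHermitian.spectral_theorem hherm
    rw [this, Unitary.conjStarAlgAut_apply]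
    show X * _ * star X = _
    rw [hs, RCLike.ofReal_real_eq_id]
    rfl
  have hMt : Mᴴ = Mᵀ := Matrix.conjTranspose_eq_transpose_of_trivial M
  refine ⟨X, d, hX, hX', hdnn, by rw [← hMt]; exact hspec, ?_⟩
  -- nuclear norm = ∑ √ d
  have hGpsd : (X * diagonal (fun i => Real.sqrt (d i)) * Xᵀ).PosSemidef := by
    have := (Matrix.PosSemidef.diagonal (d := fun i => Real.sqrt (d i))
      (fun i => Real.sqrt_nonneg _)).mul_mul_conjTranspose_same X
    simpa [Matrix.conjTranspose_eq_transpose_of_trivial] using this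
  have hsq : (X * diagonal (fun i => Real.sqrt (d i)) * Xᵀ) ^ 2 = Mᴴ * M := by
    rw [pow_two, nn_conj_mul hX, hspec]
    have : (fun i => Real.sqrt (d i) * Real.sqrt (d i)) = d :=
      funext fun i => Real.mul_self_sqrt (hdnn i)
    rw [this]
  rw [nuclearNorm]
  show Matrix.trace (X * diagonal _ * star X) = _
  rw [hs, RCLike.ofReal_real_eq_id]
  exact nn_conj_trace hX _
lemma nn_hcd {k : ℕ} (d : Fin k → ℝ) (hdnn : ∀ i, 0 ≤ d i) (i : Fin k) :
    (Real.sqrt (d i))⁻¹ * d i = Real.sqrt (d i) := by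
  rcases eq_or_ne (d i) 0 with h|h
  · simp [h]
  · have hpos : 0 < d i := lt_of_le_of_ne (hdnn i) (Ne.symm h)
    have h2 : Real.sqrt (d i) ≠ 0 := ne_of_gt (Real.sqrt_pos.2 hpos)
    rw [inv_mul_eq_div, div_eq_iff h2, Real.mul_self_sqrt (hdnn i)]

lemma nuclear_factor_le {n m : ℕ} (A' : Matrix (Fin n) (Fin m) ℝ)
    (B' : Matrix (Fin m) (Fin m) ℝ) :
    nuclearNorm (A' * B'ᵀ) ≤ 1/2 * N2 A' + 1/2 * N2 B' := by
  obtain ⟨X, d, hX, hX', hdnn, hspec, hnn⟩ := spectral_bundle (A' * B'ᵀ)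
  set M : Matrix (Fin n) (Fin m) ℝ := A' * B'ᵀ with hM
  set c : Fin m → ℝ := fun i => (Real.sqrt (d i))⁻¹ with hc
  set W : Matrix (Fin n) (Fin m) ℝ := M * X * diagonal c with hW
  set e : Fin m → ℝ := fun i => Real.sqrt (d i) * c i with he
  have hcd : ∀ i, c i * d i = Real.sqrt (d i) := fun i => nn_hcd d hdnn i
  -- e1 : Mᵀ * (M * X) = X * diagonal d
  have e1 : Mᵀ * (M * X) = X * diagonal d := by
    rw [← Matrix.mul_assoc, hspec, Matrix.mul_assoc, hX, Matrix.mul_one]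
  -- step 1
  have h1 : Wᵀ * (M * X) = diagonal (fun i => Real.sqrt (d i)) := by
    calc Wᵀ * (M * X) = diagonal c * (Xᵀ * (Mᵀ * (M * X))) := by
          rw [hW]; simp only [transpose_mul, diagonal_transpose, Matrix.mul_assoc]
      _ = diagonal c * diagonal d := by rw [e1, nn_cancel_left hX]
      _ = _ := by rw [diagonal_mul_diagonal]; exact congrArg Matrix.diagonal (funext hcd)
  have htr1 : Matrix.trace (Wᵀ * (M * X)) = ∑ i, Real.sqrt (d i) := by
    rw [h1, trace_diagonal]
  -- step 2
  have h2 : Wᵀ * (M * X) = (A'ᵀ * W)ᵀ * (B'ᵀ * X) := by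
    rw [hM]; simp only [transpose_mul, transpose_transpose, Matrix.mul_assoc]
  -- step 3
  have h3 : N2 (B'ᵀ * X) = N2 B' := by
    rw [N2, N2]
    have : (B'ᵀ * X)ᵀ * (B'ᵀ * X) = Xᵀ * (B' * (B'ᵀ * X)) := by
      simp only [transpose_mul, transpose_transpose, Matrix.mul_assoc]
    rw [this, Matrix.trace_mul_comm]
    have : B' * (B'ᵀ * X) * Xᵀ = B' * B'ᵀ := by
      simp only [Matrix.mul_assoc]; rw [hX', Matrix.mul_one]
    rw [this, Matrix.trace_mul_comm]
  -- step 4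
  have hYY : (M * X)ᵀ * (M * X) = diagonal d := by
    calc (M * X)ᵀ * (M * X) = Xᵀ * (Mᵀ * (M * X)) := by
          simp only [transpose_mul, Matrix.mul_assoc]
      _ = diagonal d := by rw [e1, nn_cancel_left hX]
  have hWW : Wᵀ * W = diagonal e := by
    calc Wᵀ * W = diagonal c * ((M * X)ᵀ * (M * X)) * diagonal c := by
          rw [hW]; simp only [transpose_mul, diagonal_transpose, Matrix.mul_assoc]
      _ = diagonal c * diagonal d * diagonal c := by rw [hYY]
      _ = diagonal e := by
          rw [diagonal_mul_diagonal, diagonal_mul_diagonal]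
          exact congrArg Matrix.diagonal (funext fun i => by
            show c i * d i * c i = e i
            simp only [he]; rw [hcd i])
  have hce : (fun i => c i * e i) = c := by
    funext i
    rcases eq_or_ne (d i) 0 with h|h
    · simp [hc, he, h]
    · have hpos : 0 < d i := lt_of_le_of_ne (hdnn i) (Ne.symm h)
      have h2 : Real.sqrt (d i) ≠ 0 := ne_of_gt (Real.sqrt_pos.2 hpos)
      show c i * (Real.sqrt (d i) * c i) = c i
      simp only [hc]
      rw [inv_mul_cancel_left₀ h2]
  have hWe : W * diagonal e = W := by
    rw [hW]
    simp only [Matrix.mul_assoc, diagonal_mul_diagonal]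
    rw [hce]
  have hKK : (W * Wᵀ) * (W * Wᵀ) = W * Wᵀ := by
    calc (W * Wᵀ) * (W * Wᵀ) = W * (Wᵀ * W) * Wᵀ := by simp only [Matrix.mul_assoc]
      _ = W * diagonal e * Wᵀ := by rw [hWW]
      _ = W * Wᵀ := by rw [hWe]
  set K : Matrix (Fin n) (Fin n) ℝ := W * Wᵀ with hK
  set R : Matrix (Fin n) (Fin n) ℝ := 1 - K with hR
  have hRt : Rᵀ = R := by
    rw [hR, transpose_sub, transpose_one, hK, transpose_mul, transpose_transpose]
  have hRR : R * R = R := by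
    rw [hR, sub_mul, mul_sub, mul_sub, one_mul, one_mul, mul_one, hKK]
    abel
  have h4a : N2 (A'ᵀ * W) = Matrix.trace (A' * A'ᵀ * K) := by
    rw [N2]
    calc Matrix.trace ((A'ᵀ * W)ᵀ * (A'ᵀ * W)) = Matrix.trace (Wᵀ * (A' * (A'ᵀ * W))) := by
          simp only [transpose_mul, transpose_transpose, Matrix.mul_assoc]
      _ = Matrix.trace ((A' * (A'ᵀ * W)) * Wᵀ) := Matrix.trace_mul_comm _ _
      _ = Matrix.trace (A' * A'ᵀ * K) := by rw [hK]; simp only [Matrix.mul_assoc]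
  have h4b : Matrix.trace (A' * A'ᵀ * R) = N2 (R * A') := by
    rw [N2]
    calc Matrix.trace (A' * A'ᵀ * R) = Matrix.trace (R * (A' * A'ᵀ)) :=
          Matrix.trace_mul_comm _ _
      _ = Matrix.trace ((R * A') * A'ᵀ) := by simp only [Matrix.mul_assoc]
      _ = Matrix.trace (A'ᵀ * (R * A')) := Matrix.trace_mul_comm _ _
      _ = Matrix.trace ((R * A')ᵀ * (R * A')) := by
          rw [transpose_mul, hRt, Matrix.mul_assoc, ← Matrix.mul_assoc R R, hRR]
  have h4 : N2 (A'ᵀ * W) ≤ N2 A' := by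
    have hsplit : A' * A'ᵀ * R = A' * A'ᵀ - A' * A'ᵀ * K := by
      rw [hR, Matrix.mul_sub, Matrix.mul_one]
    have := N2_nonneg (R * A')
    rw [← h4b, hsplit, Matrix.trace_sub] at this
    have hN2A : N2 A' = Matrix.trace (A' * A'ᵀ) := by rw [N2, Matrix.trace_mul_comm]
    rw [h4a, hN2A]
    linarith
  -- combine
  rw [hnn, ← htr1, h2]
  calc Matrix.trace ((A'ᵀ * W)ᵀ * (B'ᵀ * X)) ≤ 1/2 * N2 (A'ᵀ * W) + 1/2 * N2 (B'ᵀ * X) :=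
        trace_t_mul_le _ _
    _ ≤ 1/2 * N2 A' + 1/2 * N2 B' := by
        rw [h3]
        have := h4
        linarith
lemma N2_add {a b : ℕ} (C D : Matrix (Fin a) (Fin b) ℝ) :
    N2 (C + D) = N2 C + 2 * Matrix.trace (Cᵀ * D) + N2 D := by
  rw [N2, N2, N2, transpose_add, Matrix.add_mul, Matrix.mul_add, Matrix.mul_add,
    Matrix.trace_add, Matrix.trace_add, Matrix.trace_add]
  have : Matrix.trace (Dᵀ * C) = Matrix.trace (Cᵀ * D) := by
    rw [← Matrix.trace_transpose (Dᵀ * C), transpose_mul, transpose_transpose]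
  rw [this]; ring

lemma N2_smul {a b : ℕ} (s : ℝ) (C : Matrix (Fin a) (Fin b) ℝ) :
    N2 (s • C) = s^2 * N2 C := by
  simp only [N2_eq_sum, Matrix.smul_apply, smul_eq_mul, mul_pow, Finset.mul_sum]

lemma psd_spectral {k : ℕ} (Q : Matrix (Fin k) (Fin k) ℝ) (hQ : Q.PosSemidef) :
    ∃ (Y : Matrix (Fin k) (Fin k) ℝ) (e : Fin k → ℝ),
      Yᵀ * Y = 1 ∧ Y * Yᵀ = 1 ∧ (∀ i, 0 ≤ e i) ∧ Q = Y * diagonal e * Yᵀ := by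
  have hherm := hQ.1
  set Y : Matrix (Fin k) (Fin k) ℝ :=
    (Matrix.IsHermitian.eigenvectorUnitary hherm : Matrix (Fin k) (Fin k) ℝ)
  have hs : star Y = Yᵀ := by
    rw [Matrix.star_eq_conjTranspose, Matrix.conjTranspose_eq_transpose_of_trivial]
  have hY : Yᵀ * Y = 1 := by rw [← hs]; exact Unitary.coe_star_mul_self _
  have hY' : Y * Yᵀ = 1 := by rw [← hs]; exact Unitary.coe_mul_star_self _
  refine ⟨Y, hherm.eigenvalues, hY, hY', fun i => hQ.eigenvalues_nonneg i,
    (Matrix.IsHermitian.spectral_theorem hherm).trans ?_⟩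
  rw [Unitary.conjStarAlgAut_apply]
  show Y * _ * star Y = _
  rw [hs, RCLike.ofReal_real_eq_id]
  rfl

lemma construct_factor {n m : ℕ} (P : Matrix (Fin n) (Fin n) ℝ)
    (Q : Matrix (Fin m) (Fin m) ℝ) (hQ : Q.PosSemidef)
    (Θ : Matrix (Fin n) (Fin m) ℝ) {ε : ℝ} (hε : 0 < ε) :
    ∃ (U : Matrix (Fin n) (Fin m) ℝ) (V : Matrix (Fin m) (Fin m) ℝ),
      U * Vᵀ = Θ ∧
      1/2 * N2 (P * U) + 1/2 * N2 (Q * V) ≤ nuclearNorm (P * Θ * Q) + ε := by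
  obtain ⟨X, d, hX, hX', hdnn, hspec, hnn⟩ := spectral_bundle (P * Θ * Q)
  obtain ⟨M, hM⟩ : ∃ M' : Matrix (Fin n) (Fin m) ℝ, M' = P * Θ * Q := ⟨_, rfl⟩
  rw [← hM] at hspec hnn
  obtain ⟨Y, e, hY, hY', henn, hQspec⟩ := psd_spectral Q hQ
  have hQt : Qᵀ = Q := by
    rw [← Matrix.conjTranspose_eq_transpose_of_trivial]; exact hQ.1
  -- pseudoinverse machinery
  obtain ⟨Qp, hQp⟩ : ∃ Z : Matrix (Fin m) (Fin m) ℝ,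
    Z = Y * diagonal (fun i => (e i)⁻¹) * Yᵀ := ⟨_, rfl⟩
  obtain ⟨Pi, hPi⟩ : ∃ Z : Matrix (Fin m) (Fin m) ℝ,
    Z = Y * diagonal (fun i => e i * (e i)⁻¹) * Yᵀ := ⟨_, rfl⟩
  have hdeq : ∀ (a b : Fin m → ℝ), (∀ i, a i = b i) →
      Y * diagonal a * Yᵀ = Y * diagonal b * Yᵀ := by
    intro a b h
    rw [funext h]
  have hQQp : Q * Qp = Pi := by rw [hQspec, hQp, hPi, nn_conj_mul hY]
  have hQpQ : Qp * Q = Pi := by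
    rw [hQspec, hQp, nn_conj_mul hY, hPi]
    exact hdeq _ _ fun i => by ring
  have hPiQ : Pi * Q = Q := by
    rw [hQspec, hPi, nn_conj_mul hY]
    apply hdeq
    intro i
    rcases eq_or_ne (e i) 0 with h|h
    · simp [h]
    · field_simp
  have hQPi : Q * Pi = Q := by
    rw [hQspec, hPi, nn_conj_mul hY]
    apply hdeq
    intro i
    rcases eq_or_ne (e i) 0 with h|h
    · simp [h]
    · field_simp
  have hPiPi : Pi * Pi = Pi := by
    rw [hPi, nn_conj_mul hY]
    apply hdeq
    intro i
    rcases eq_or_ne (e i) 0 with h|h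
    · simp [h]
    · field_simp
  have hQpPi : Qp * Pi = Qp := by
    rw [hQp, hPi, nn_conj_mul hY]
    apply hdeq
    intro i
    rcases eq_or_ne (e i) 0 with h|h
    · simp [h]
    · field_simp
  have hPit : Piᵀ = Pi := by rw [hPi]; exact nn_conj_t _
  obtain ⟨J, hJ⟩ : ∃ Z : Matrix (Fin m) (Fin m) ℝ, Z = 1 - Pi := ⟨_, rfl⟩
  have hJt : Jᵀ = J := by rw [hJ, transpose_sub, transpose_one, hPit]
  have hQJ : Q * J = 0 := by rw [hJ, Matrix.mul_sub, Matrix.mul_one, hQPi, sub_self]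
  have hJQ : J * Q = 0 := by rw [hJ, Matrix.sub_mul, Matrix.one_mul, hPiQ, sub_self]
  have hQpJ : Qp * J = 0 := by rw [hJ, Matrix.mul_sub, Matrix.mul_one, hQpPi, sub_self]
  have hJJ : J * J = J := by
    rw [hJ, sub_mul, mul_sub, mul_sub, one_mul, one_mul, mul_one, hPiPi]
    abel
  have hPiJ1 : Pi + J = 1 := by rw [hJ]; abel
  -- kernel facts
  have hPiH : Pi * (Mᵀ * M) = Mᵀ * M := by
    have hMt : Mᵀ = Q * (Θᵀ * Pᵀ) := by
      rw [hM, transpose_mul, transpose_mul, hQt]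
    calc Pi * (Mᵀ * M) = (Pi * Q) * ((Θᵀ * Pᵀ) * M) := by
          rw [hMt]; simp only [Matrix.mul_assoc]
      _ = Q * ((Θᵀ * Pᵀ) * M) := by rw [hPiQ]
      _ = Mᵀ * M := by rw [hMt]; simp only [Matrix.mul_assoc]
  have h0 : (Pi * X) * diagonal d = X * diagonal d := by
    have h1 := hPiH
    rw [hspec] at h1
    have h2 := congrArg (fun W => W * X) h1
    simp only [Matrix.mul_assoc] at h2
    rw [hX] at h2
    simp only [Matrix.mul_one] at h2
    rw [← Matrix.mul_assoc] at h2
    exact h2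
  have hker : ∀ (φ : Fin m → ℝ), (∀ i, d i = 0 → φ i = 0) →
      Pi * (X * diagonal φ) = X * diagonal φ := by
    intro φ hφ
    rw [← Matrix.mul_assoc]
    ext k i
    have hd := congrFun (congrFun h0 k) i
    rw [Matrix.mul_diagonal, Matrix.mul_diagonal] at hd
    rw [Matrix.mul_diagonal, Matrix.mul_diagonal]
    rcases eq_or_ne (d i) 0 with h|h
    · rw [hφ i h, mul_zero, mul_zero]
    · rw [mul_right_cancel₀ h hd]
  -- sqrtG
  obtain ⟨f, hf⟩ : ∃ f' : Fin m → ℝ, f' = fun i => Real.sqrt (Real.sqrt (d i)) := ⟨_, rfl⟩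
  have hf0 : ∀ i, d i = 0 → f i = 0 := by
    intro i h; simp only [hf]; rw [h]; simp
  have hfnn : ∀ i, 0 ≤ f i := by intro i; simp only [hf]; exact Real.sqrt_nonneg _
  have hff : ∀ i, f i * f i = Real.sqrt (d i) := by
    intro i; simp only [hf]; exact Real.mul_self_sqrt (Real.sqrt_nonneg _)
  have hdd : ∀ i, Real.sqrt (d i) * Real.sqrt (d i) = d i :=
    fun i => Real.mul_self_sqrt (hdnn i)
  obtain ⟨sG, hsG⟩ : ∃ Z : Matrix (Fin m) (Fin m) ℝ, Z = X * diagonal f * Xᵀ := ⟨_, rfl⟩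
  have hsGt : sGᵀ = sG := by rw [hsG]; exact nn_conj_t f
  have hPisG : Pi * sG = sG := by
    rw [hsG, ← Matrix.mul_assoc, hker f hf0]
  have hsGPi : sG * Pi = sG := by
    have h1 := congrArg (fun W => Wᵀ) hPisG
    simp only [transpose_mul, hPit, hsGt] at h1
    exact h1
  have hJsG : J * sG = 0 := by rw [hJ, Matrix.sub_mul, Matrix.one_mul, hPisG, sub_self]
  have hsGJ : sG * J = 0 := by rw [hJ, Matrix.mul_sub, Matrix.mul_one, hsGPi, sub_self]
  -- epsilon bookkeeping
  obtain ⟨Z, hZ⟩ : ∃ Z' : Matrix (Fin n) (Fin m) ℝ, Z' = P * Θ * J := ⟨_, rfl⟩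
  obtain ⟨K, hK⟩ : ∃ K' : ℝ, K' = N2 Z + (∑ i, f i) + (m : ℝ) + 1 := ⟨_, rfl⟩
  have hN2Z : 0 ≤ N2 Z := N2_nonneg Z
  have hsumf : 0 ≤ ∑ i, f i := Finset.sum_nonneg fun i _ => hfnn i
  have hKpos : 0 < K := by rw [hK]; positivity
  obtain ⟨s, hsdef⟩ : ∃ s' : ℝ, s' = min 1 (ε/(2*K)) := ⟨_, rfl⟩
  have hs : 0 < s := by
    rw [hsdef]; exact lt_min one_pos (div_pos hε (by positivity))
  have hs1 : s ≤ 1 := by rw [hsdef]; exact min_le_left _ _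
  have hsK : s * K ≤ ε/2 := by
    have h1 : s ≤ ε/(2*K) := by rw [hsdef]; exact min_le_right _ _
    have h2 := mul_le_mul_of_nonneg_right h1 (le_of_lt hKpos)
    have h3 : ε/(2*K)*K = ε/2 := by field_simp
    linarith
  -- the matrix A and its inverse
  obtain ⟨g, hg⟩ : ∃ g' : Fin m → ℝ, g' = fun i => (f i + s)⁻¹ := ⟨_, rfl⟩
  have hfs : ∀ i, 0 < f i + s := fun i => add_pos_of_nonneg_of_pos (hfnn i) hs
  obtain ⟨A, hA⟩ : ∃ Z : Matrix (Fin m) (Fin m) ℝ,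
    Z = X * diagonal (fun i => f i + s) * Xᵀ := ⟨_, rfl⟩
  obtain ⟨Ai, hAi⟩ : ∃ Z : Matrix (Fin m) (Fin m) ℝ, Z = X * diagonal g * Xᵀ := ⟨_, rfl⟩
  have hAt : Aᵀ = A := by rw [hA]; exact nn_conj_t _
  have hAit : Aiᵀ = Ai := by rw [hAi]; exact nn_conj_t _
  have hAAi : A * Ai = 1 := by
    rw [hA, hAi, nn_conj_mul hX]
    have h1 : (fun i => (f i + s) * g i) = fun _ => (1:ℝ) := by
      funext i; simp only [hg]; rw [mul_inv_cancel₀ (hfs i).ne']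
    rw [h1, diagonal_one, Matrix.mul_one, hX']
  have hAiA : Ai * A = 1 := by
    rw [hAi, hA, nn_conj_mul hX]
    have h1 : (fun i => g i * (f i + s)) = fun _ => (1:ℝ) := by
      funext i; simp only [hg]; rw [inv_mul_cancel₀ (hfs i).ne']
    rw [h1, diagonal_one, Matrix.mul_one, hX']
  have hA_eq : A = sG + s • (1 : Matrix (Fin m) (Fin m) ℝ) := by
    have hdiag : diagonal (fun i => f i + s)
        = diagonal f + s • (1 : Matrix (Fin m) (Fin m) ℝ) := by
      ext i j
      by_cases h : i = j
      · subst h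
        simp [Matrix.diagonal_apply_eq, Matrix.one_apply_eq]
      · simp [Matrix.diagonal_apply_ne _ h, Matrix.one_apply_ne h]
    rw [hA, hdiag, Matrix.mul_add, Matrix.add_mul, ← hsG, Matrix.mul_smul, Matrix.mul_one,
      Matrix.smul_mul, hX']
  have hPiA : Pi * A = sG + s • Pi := by
    rw [hA_eq, Matrix.mul_add, hPisG, Matrix.mul_smul, Matrix.mul_one]
  have hAPi : A * Pi = sG + s • Pi := by
    rw [hA_eq, Matrix.add_mul, hsGPi, Matrix.smul_mul, Matrix.one_mul]
  have hJA : J * A = s • J := by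
    rw [hJ, Matrix.sub_mul, Matrix.one_mul, hPiA, hA_eq, smul_sub]
    abel
  have hAJ : A * J = s • J := by
    rw [hJ, Matrix.mul_sub, Matrix.mul_one, hAPi, hA_eq, smul_sub]
    abel
  have hAiJ : J * Ai = Ai * J := by
    have h1 : J * Ai = Ai * ((A * J) * Ai) := by
      rw [← Matrix.mul_assoc Ai (A * J) Ai, ← Matrix.mul_assoc Ai A J, hAiA, Matrix.one_mul]
    have h2 : Ai * J = Ai * ((J * A) * Ai) := by
      rw [Matrix.mul_assoc J A Ai, hAAi, Matrix.mul_one]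
    rw [h1, h2, hAJ, hJA]
  -- V, B, U
  obtain ⟨V, hV⟩ : ∃ Z : Matrix (Fin m) (Fin m) ℝ, Z = Qp * A + s⁻¹ • J := ⟨_, rfl⟩
  obtain ⟨B, hB⟩ : ∃ Z : Matrix (Fin m) (Fin m) ℝ,
    Z = Ai * Q + s • J - J * (Ai * Q) := ⟨_, rfl⟩
  have hQpAAiQ : (Qp * A) * (Ai * Q) = Pi := by
    calc (Qp * A) * (Ai * Q) = Qp * ((A * Ai) * Q) := by simp only [Matrix.mul_assoc]
      _ = Qp * Q := by rw [hAAi, Matrix.one_mul]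
      _ = Pi := hQpQ
  have hQpAJ : (Qp * A) * J = 0 := by
    rw [Matrix.mul_assoc, hAJ, Matrix.mul_smul, hQpJ, smul_zero]
  have hQpAB : (Qp * A) * B = Pi := by
    rw [hB, Matrix.mul_sub, Matrix.mul_add, hQpAAiQ, Matrix.mul_smul, hQpAJ, smul_zero,
      add_zero, ← Matrix.mul_assoc (Qp * A) J (Ai * Q), hQpAJ, Matrix.zero_mul, sub_zero]
  have hJB : J * B = s • J := by
    rw [hB, Matrix.mul_sub, Matrix.mul_add, Matrix.mul_smul,
      ← Matrix.mul_assoc J J (Ai * Q), hJJ]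
    abel
  have hVB : V * B = 1 := by
    rw [hV, Matrix.add_mul, Matrix.smul_mul, hQpAB, hJB, smul_smul,
      inv_mul_cancel₀ hs.ne', one_smul, hPiJ1]
  refine ⟨Θ * Bᵀ, V, ?_, ?_⟩
  · calc Θ * Bᵀ * Vᵀ = Θ * (V * B)ᵀ := by rw [transpose_mul, Matrix.mul_assoc]
      _ = Θ := by rw [hVB, transpose_one, Matrix.mul_one]
  -- the cost bound
  have hQV : Q * V = sG + s • Pi := by
    rw [hV, Matrix.mul_add, Matrix.mul_smul, hQJ, smul_zero, add_zero,
      ← Matrix.mul_assoc Q Qp A, hQQp, hPiA]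
  have hMJ : M * J = 0 := by
    rw [hM, Matrix.mul_assoc (P * Θ) Q J, hQJ, Matrix.mul_zero]
  have hJMt : J * Mᵀ = 0 := by
    have h1 := congrArg (fun W => Wᵀ) hMJ
    simp only [transpose_mul, hJt, transpose_zero] at h1
    exact h1
  have hBt : Bᵀ = Q * Ai + s • J - (Q * Ai) * J := by
    rw [hB]
    simp only [transpose_sub, transpose_add, transpose_mul, transpose_smul, hJt, hAit, hQt]
  have hPU : P * (Θ * Bᵀ) = M * Ai + s • Z := by
    have h1 : (P * Θ) * (Q * Ai) = M * Ai := by rw [hM]; simp only [Matrix.mul_assoc]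
    have h2 : (P * Θ) * ((Q * Ai) * J) = 0 := by
      have h3 : (Q * Ai) * J = (Q * J) * Ai := by
        rw [Matrix.mul_assoc, ← hAiJ, ← Matrix.mul_assoc]
      rw [h3, hQJ, Matrix.zero_mul, Matrix.mul_zero]
    rw [← Matrix.mul_assoc P Θ Bᵀ, hBt, Matrix.mul_sub, Matrix.mul_add, h1, Matrix.mul_smul,
      h2, sub_zero, hZ]
  -- cross term vanishes
  have hcross : Matrix.trace ((M * Ai)ᵀ * Z) = 0 := by
    rw [transpose_mul, hAit]
    have e1 : (Ai * Mᵀ) * Z = (Ai * (Mᵀ * (P * Θ))) * J := by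
      rw [hZ]; simp only [Matrix.mul_assoc]
    rw [e1, Matrix.trace_mul_comm]
    have e2 : J * (Ai * (Mᵀ * (P * Θ))) = (Ai * (J * Mᵀ)) * (P * Θ) := by
      rw [← Matrix.mul_assoc J Ai (Mᵀ * (P * Θ)), hAiJ]
      simp only [Matrix.mul_assoc]
    rw [e2, hJMt, Matrix.mul_zero, Matrix.zero_mul, Matrix.trace_zero]
  have hN2PU : N2 (P * (Θ * Bᵀ)) = N2 (M * Ai) + s^2 * N2 Z := by
    rw [hPU, N2_add, Matrix.mul_smul, Matrix.trace_smul, hcross, N2_smul,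
      smul_zero, mul_zero, add_zero]
  -- N2 (M * Ai)
  have hNMAi : N2 (M * Ai) = ∑ i, g i * (d i * g i) := by
    rw [N2, transpose_mul, hAit]
    have e1 : (Ai * Mᵀ) * (M * Ai) = Ai * ((Mᵀ * M) * Ai) := by
      simp only [Matrix.mul_assoc]
    rw [e1, hspec, hAi, nn_conj_mul hX, nn_conj_mul hX, nn_conj_trace hX]
  have hNMAi_le : N2 (M * Ai) ≤ ∑ i, Real.sqrt (d i) := by
    rw [hNMAi]
    apply Finset.sum_le_sum
    intro i _
    have hg0 : 0 ≤ g i := by simp only [hg]; exact le_of_lt (inv_pos.2 (hfs i))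
    have key : (f i * g i) * (f i * g i) ≤ 1 := by
      have h1 : f i * g i ≤ (f i + s) * g i :=
        mul_le_mul_of_nonneg_right (by linarith [hs]) hg0
      have h2 : (f i + s) * g i = 1 := by
        simp only [hg]; rw [mul_inv_cancel₀ (hfs i).ne']
      have hfg1 : f i * g i ≤ 1 := by rw [← h2]; exact h1
      have hfg0 : 0 ≤ f i * g i := mul_nonneg (hfnn i) hg0
      have h3 := mul_le_mul hfg1 hfg1 hfg0 zero_le_one
      simpa using h3
    have hd4 : d i = (f i * f i) * (f i * f i) := by rw [hff i, hdd i]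
    calc g i * (d i * g i) = (f i * f i) * ((f i * g i) * (f i * g i)) := by
          rw [hd4]; ring
      _ ≤ (f i * f i) * 1 := mul_le_mul_of_nonneg_left key (mul_self_nonneg _)
      _ = Real.sqrt (d i) := by rw [mul_one, hff i]
  -- N2 (Q * V)
  have hNsG : N2 sG = ∑ i, Real.sqrt (d i) := by
    rw [N2, hsGt, hsG, nn_conj_mul hX, nn_conj_trace hX]
    exact Finset.sum_congr rfl fun i _ => hff i
  have htrsGPi : Matrix.trace (sGᵀ * (s • Pi)) = s * ∑ i, f i := by
    rw [hsGt, Matrix.mul_smul, Matrix.trace_smul, smul_eq_mul]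
    congr 1
    rw [Matrix.trace_mul_comm, hPisG, hsG, nn_conj_trace hX]
  have hNPi : N2 Pi = ∑ i, e i * (e i)⁻¹ := by
    rw [N2, hPit, hPiPi, hPi, nn_conj_trace hY]
  have hN2QV : N2 (Q * V)
      = (∑ i, Real.sqrt (d i)) + 2*(s * ∑ i, f i) + s^2*(∑ i, e i * (e i)⁻¹) := by
    rw [hQV, N2_add, hNsG, htrsGPi, N2_smul, hNPi]
  -- τ bounds
  have hτle : ∀ i, e i * (e i)⁻¹ ≤ 1 := by
    intro i
    rcases eq_or_ne (e i) 0 with h|h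
    · simp [h]
    · rw [mul_inv_cancel₀ h]
  have hτ0 : ∀ i, 0 ≤ e i * (e i)⁻¹ := by
    intro i
    rcases eq_or_ne (e i) 0 with h|h
    · simp [h]
    · rw [mul_inv_cancel₀ h]; norm_num
  have htrPi_le : (∑ i, e i * (e i)⁻¹) ≤ (m : ℝ) := by
    calc (∑ i, e i * (e i)⁻¹) ≤ ∑ _i : Fin m, (1:ℝ) :=
          Finset.sum_le_sum fun i _ => hτle i
      _ = (m : ℝ) := by simp
  have htrPi0 : 0 ≤ ∑ i, e i * (e i)⁻¹ := Finset.sum_nonneg fun i _ => hτ0 i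
  -- put it together
  rw [← hM, hnn, hN2PU, hN2QV]
  have hss : s * s ≤ s := by
    have := mul_le_mul_of_nonneg_right hs1 hs.le
    simpa using this
  have e1 : s^2 * N2 Z ≤ s * N2 Z := by
    have h1 := mul_le_mul_of_nonneg_right hss hN2Z
    rw [pow_two]; linarith
  have e2 : s^2 * (∑ i, e i * (e i)⁻¹) ≤ s * (m:ℝ) := by
    have h1 : s^2 * (∑ i, e i * (e i)⁻¹) ≤ s^2 * (m:ℝ) :=
      mul_le_mul_of_nonneg_left htrPi_le (sq_nonneg s)
    have h2 : s^2 * (m:ℝ) ≤ s * (m:ℝ) := by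
      rw [pow_two]; exact mul_le_mul_of_nonneg_right hss (Nat.cast_nonneg m)
    linarith
  have p1 : 0 ≤ s * N2 Z := mul_nonneg hs.le hN2Z
  have p2 : 0 ≤ s * (m:ℝ) := mul_nonneg hs.le (Nat.cast_nonneg m)
  have hsKexp : s * K = s * N2 Z + s * (∑ i, f i) + s * (m:ℝ) + s := by rw [hK]; ring
  linarith [hNMAi_le, e1, e2, p1, p2, hsKexp, hsK, hs.le, hε.le]

lemma sInf_le_aux (S T : Set ℝ) (hT : T.Nonempty)
    (h1 : ∀ x ∈ T, ∀ ε : ℝ, 0 < ε → ∃ y ∈ S, y ≤ x + ε)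
    (h2 : ∀ x ∈ S, ∃ y ∈ T, y ≤ x + 1) :
    sInf S ≤ sInf T := by
  by_cases hbdd : BddBelow S
  · apply le_csInf hT
    intro x hx
    apply le_of_forall_pos_le_add
    intro ε hε
    obtain ⟨y, hyS, hy⟩ := h1 x hx ε hε
    exact le_trans (csInf_le hbdd hyS) hy
  · rw [Real.sInf_of_not_bddBelow hbdd]
    have hTbdd : ¬ BddBelow T := by
      rintro ⟨b, hb⟩
      apply hbdd
      refine ⟨b - 1, fun x hx => ?_⟩
      obtain ⟨y, hyT, hy⟩ := h2 x hx
      have hby := hb hyT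
      linarith
    rw [Real.sInf_of_not_bddBelow hTbdd]

/-- Proposition 1, first part: the generalized nuclear norm penalized infimum equals
the latent-factor infimum. -/
theorem stmt_12 {n m : ℕ} (P : Matrix (Fin n) (Fin n) ℝ) (hP : P.PosSemidef)
    (Q : Matrix (Fin m) (Fin m) ℝ) (hQ : Q.PosSemidef)
    (L : Matrix (Fin n) (Fin m) ℝ → ℝ) :
    sInf {y : ℝ | ∃ Θ : Matrix (Fin n) (Fin m) ℝ, y = L Θ + nuclearNorm (P * Θ * Q)}
      = sInf {y : ℝ | ∃ (U : Matrix (Fin n) (Fin m) ℝ) (V : Matrix (Fin m) (Fin m) ℝ),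
          y = L (U * Vᵀ) + (1 / 2) * frobNorm (P * U) ^ 2 + (1 / 2) * frobNorm (Q * V) ^ 2} := by
  have hQt : Qᵀ = Q := by
    rw [← Matrix.conjTranspose_eq_transpose_of_trivial]; exact hQ.1
  have key : ∀ (U : Matrix (Fin n) (Fin m) ℝ) (V : Matrix (Fin m) (Fin m) ℝ),
      L (U * Vᵀ) + nuclearNorm (P * (U * Vᵀ) * Q)
        ≤ L (U * Vᵀ) + (1 / 2) * frobNorm (P * U) ^ 2 + (1 / 2) * frobNorm (Q * V) ^ 2 := by
    intro U V
    have hfac : P * (U * Vᵀ) * Q = (P * U) * (Q * V)ᵀ := by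
      rw [transpose_mul, hQt]
      simp only [Matrix.mul_assoc]
    have h := nuclear_factor_le (P * U) (Q * V)
    rw [← hfac] at h
    rw [frobNorm_sq, frobNorm_sq]
    linarith
  have key2 : ∀ (Θ : Matrix (Fin n) (Fin m) ℝ) (ε : ℝ), 0 < ε →
      ∃ (U : Matrix (Fin n) (Fin m) ℝ) (V : Matrix (Fin m) (Fin m) ℝ),
        L (U * Vᵀ) + (1 / 2) * frobNorm (P * U) ^ 2 + (1 / 2) * frobNorm (Q * V) ^ 2
          ≤ L Θ + nuclearNorm (P * Θ * Q) + ε := by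
    intro Θ ε hε
    obtain ⟨U, V, hUV, hle⟩ := construct_factor P Q hQ Θ hε
    refine ⟨U, V, ?_⟩
    rw [frobNorm_sq, frobNorm_sq, hUV]
    linarith
  apply le_antisymm
  · refine sInf_le_aux _ _ ⟨_, ⟨0, 0, rfl⟩⟩ ?_ ?_
    · rintro x ⟨U, V, rfl⟩ ε hε
      refine ⟨L (U * Vᵀ) + nuclearNorm (P * (U * Vᵀ) * Q), ⟨U * Vᵀ, rfl⟩, ?_⟩
      have := key U V
      linarith
    · rintro x ⟨Θ, rfl⟩
      obtain ⟨U, V, hle⟩ := key2 Θ 1 one_pos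
      exact ⟨_, ⟨U, V, rfl⟩, hle⟩
  · refine sInf_le_aux _ _ ⟨_, ⟨0, rfl⟩⟩ ?_ ?_
    · rintro x ⟨Θ, rfl⟩ ε hε
      obtain ⟨U, V, hle⟩ := key2 Θ ε hε
      exact ⟨_, ⟨U, V, rfl⟩, hle⟩
    · rintro x ⟨U, V, rfl⟩
      refine ⟨L (U * Vᵀ) + nuclearNorm (P * (U * Vᵀ) * Q), ⟨U * Vᵀ, rfl⟩, ?_⟩
      have := key U V
      linarith
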